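/- Let E ⊆ ℝ^n be compact with H^d_∞(E) > 0 and let f ≥ 0 be continuous on E. Then for 1 < p < ∞, (1/H^d_∞(E)) ∫_E f dH^d_∞ ≤ C(n) ((1/H^d_∞(E)) ∫_E f^p dH^d_∞)^{1/p}, i.e., a Jensen-type inequality holds for Choquet integration against Hausdorff content, with constant depending only on n. -/

import Mathlib

open MeasureTheory Metric Set
open scoped ENNReal NNReal

/-- The `d`-dimensional Hausdorff content `H^d_∞`. -/
noncomputable def hcontent {n : ℕ} (d : ℝ) (A : Set (EuclideanSpace ℝ (Fin n))) : ℝ≥0∞ :=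
  MeasureTheory.OuterMeasure.boundedBy (fun U => EMetric.diam U ^ d) A

/-- The `p`-Choquet integral `∫_A f^p dH^d_∞ = p ∫_0^∞ H^d_∞({x ∈ A : f x > t}) t^{p-1} dt`. -/
noncomputable def choquet {n : ℕ} (d : ℝ) (p : ℝ) (A : Set (EuclideanSpace ℝ (Fin n)))
    (f : EuclideanSpace ℝ (Fin n) → ℝ) : ℝ≥0∞ :=
  ∫⁻ t in Set.Ioi (0 : ℝ),
    hcontent d {x | x ∈ A ∧ f x > t} * ENNReal.ofReal (p * t ^ (p - 1))

/-- Jensen-type inequality for Choquet integration: for `E ⊆ ℝ^n` compact with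
`H^d_∞(E) > 0`, `f ≥ 0` continuous on `E`, and `1 < p < ∞`,
`(1/H^d_∞(E)) ∫_E f dH^d_∞ ≤ C(n) ((1/H^d_∞(E)) ∫_E f^p dH^d_∞)^{1/p}`. -/
theorem choquet_jensen (n : ℕ) :
    ∃ C : ℝ, 0 < C ∧ ∀ (d : ℝ), 0 ≤ d → ∀ (p : ℝ), 1 < p →
      ∀ (E : Set (EuclideanSpace ℝ (Fin n))), IsCompact E → 0 < hcontent d E →
      ∀ f : EuclideanSpace ℝ (Fin n) → ℝ, ContinuousOn f E → (∀ x ∈ E, 0 ≤ f x) →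
      choquet d 1 E f / hcontent d E ≤
        ENNReal.ofReal C * (choquet d p E f / hcontent d E) ^ (1 / p) := by
  refine ⟨2, two_pos, fun d hd p hp E hE hE0 f hf hf0 => ?_⟩
  set μ : ℝ → ℝ≥0∞ := fun t => hcontent d {x | x ∈ E ∧ f x > t} with hμ
  set H : ℝ≥0∞ := hcontent d E with hH
  set A : ℝ≥0∞ := choquet d 1 E f with hA
  set B : ℝ≥0∞ := choquet d p E f with hB
  have hp0 : (0:ℝ) < p := lt_trans one_pos hp
  have hp1 : (0:ℝ) ≤ p - 1 := by linarith
  -- trivial case H = ∞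
  rcases eq_or_ne H ∞ with hHtop | hHtop
  · simp [hHtop]
  -- μ ≤ H
  have hμle : ∀ t : ℝ, μ t ≤ H := fun t =>
    measure_mono (fun x hx => hx.1)
  -- A as plain integral of μ
  have hAeq : A = ∫⁻ t in Set.Ioi (0:ℝ), μ t := by
    rw [hA, choquet]
    refine setLIntegral_congr_fun measurableSet_Ioi (fun t ht => ?_)
    simp [hμ]
  -- lower bound for B over Ioi T for T > 0
  have key : ∀ T : ℝ, 0 < T →
      ENNReal.ofReal (T ^ (p-1)) * (∫⁻ t in Set.Ioi T, μ t) ≤ B := by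
    intro T hT
    have h1 : (∫⁻ t in Set.Ioi T, ENNReal.ofReal (T ^ (p-1)) * μ t) ≤
        ∫⁻ t in Set.Ioi T, μ t * ENNReal.ofReal (p * t ^ (p-1)) := by
      refine setLIntegral_mono' measurableSet_Ioi fun t ht => ?_
      rw [mul_comm]
      refine mul_le_mul_right ?_ _
      refine ENNReal.ofReal_le_ofReal ?_
      have ht' : T ≤ t := le_of_lt ht
      calc T ^ (p-1) = 1 * T ^ (p-1) := (one_mul _).symm
        _ ≤ p * t ^ (p-1) := by
            refine mul_le_mul (le_of_lt hp) ?_ (Real.rpow_nonneg hT.le _) hp0.le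
            exact Real.rpow_le_rpow hT.le ht' hp1
    have h2 : (∫⁻ t in Set.Ioi T, μ t * ENNReal.ofReal (p * t ^ (p-1))) ≤ B := by
      rw [hB, choquet]
      refine lintegral_mono' (Measure.restrict_mono (fun t ht => lt_trans hT ht) le_rfl) ?_
      exact fun t => le_rfl
    calc ENNReal.ofReal (T ^ (p-1)) * (∫⁻ t in Set.Ioi T, μ t)
        = ∫⁻ t in Set.Ioi T, ENNReal.ofReal (T ^ (p-1)) * μ t := by
          rw [lintegral_const_mul' _ _ ENNReal.ofReal_ne_top]
      _ ≤ B := le_trans h1 h2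
  -- splitting lemma: for T > 0, A ≤ H * ofReal T + ∫_{Ioi T} μ
  have split : ∀ T : ℝ, 0 < T → A ≤ H * ENNReal.ofReal T + ∫⁻ t in Set.Ioi T, μ t := by
    intro T hT
    have hun : Set.Ioi (0:ℝ) = Set.Ioc 0 T ∪ Set.Ioi T := (Set.Ioc_union_Ioi_eq_Ioi hT.le).symm
    have h1 : A ≤ (∫⁻ t in Set.Ioc 0 T, μ t) + ∫⁻ t in Set.Ioi T, μ t := by
      rw [hAeq, hun]; exact lintegral_union_le _ _ _
    have h2 : (∫⁻ t in Set.Ioc 0 T, μ t) ≤ H * ENNReal.ofReal T := by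
      calc (∫⁻ t in Set.Ioc 0 T, μ t) ≤ ∫⁻ _ in Set.Ioc 0 T, H := by
            exact setLIntegral_mono' measurableSet_Ioc fun t _ => hμle t
        _ = H * ENNReal.ofReal T := by
            rw [setLIntegral_const, Real.volume_Ioc]
            simp
    exact h1.trans (add_le_add h2 le_rfl)
  -- case A = 0
  rcases eq_or_ne A 0 with hA0 | hA0
  · simp [hA0, ENNReal.zero_div]
  -- case A = ∞ : show B = ∞, RHS = ∞
  rcases eq_or_ne A ∞ with hAtop | hAtop
  · have hS : (∫⁻ t in Set.Ioi (1:ℝ), μ t) = ∞ := by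
      by_contra hS
      have := split 1 one_pos
      rw [hAtop] at this
      have : (⊤ : ℝ≥0∞) < ⊤ := lt_of_le_of_lt this (by
        refine ENNReal.add_lt_top.2 ⟨?_, ?_⟩
        · exact ENNReal.mul_lt_top hHtop.lt_top ENNReal.ofReal_lt_top
        · exact lt_top_iff_ne_top.2 hS)
      exact absurd this (lt_irrefl _)
    have hBtop : B = ∞ := by
      have := key 1 one_pos
      rw [hS, ENNReal.mul_top (by
        simp [Real.one_rpow, ENNReal.ofReal_eq_zero])] at this
      exact top_le_iff.1 this
    have : (B / H) = ∞ := by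
      rw [hBtop, ENNReal.div_eq_top]
      right
      exact ⟨rfl, hHtop⟩
    rw [this, ENNReal.top_rpow_of_pos (by positivity), ENNReal.mul_top (by simp)]
    exact le_top
  -- main case : 0 < A < ∞, 0 < H < ∞
  have hH0 : H ≠ 0 := hE0.ne'
  set x : ℝ≥0∞ := A / H with hx
  have hx0 : x ≠ 0 := by
    simp [hx, ENNReal.div_eq_zero_iff, hA0, hHtop]
  have hxtop : x ≠ ∞ := by
    simp [hx, ENNReal.div_eq_top, hA0, hAtop, hH0, hHtop]
  set T : ℝ := (x / 2).toReal with hT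
  have hx2top : x / 2 ≠ ∞ := by
    simp [ENNReal.div_eq_top, hxtop]
  have hx20 : x / 2 ≠ 0 := by
    simp [ENNReal.div_eq_zero_iff, hx0]
  have hToR : ENNReal.ofReal T = x / 2 := ENNReal.ofReal_toReal hx2top
  have hT0 : 0 < T := ENNReal.toReal_pos hx20 hx2top
  -- H * (x/2) = A/2
  have hHx2 : H * (x / 2) = A / 2 := by
    rw [hx]
    calc H * (A / H / 2) = H * (A / H) * 2⁻¹ := by
          rw [div_eq_mul_inv (A / H), ← mul_assoc, div_eq_mul_inv]
      _ = A * 2⁻¹ := by rw [ENNReal.mul_div_cancel hH0 hHtop]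
      _ = A / 2 := (div_eq_mul_inv A 2).symm
  -- lower bound on tail integral
  have hS : A / 2 ≤ ∫⁻ t in Set.Ioi T, μ t := by
    have h := split T hT0
    rw [hToR, hHx2] at h
    have h2 : A - A / 2 ≤ ∫⁻ t in Set.Ioi T, μ t := tsub_le_iff_left.mpr h
    rwa [ENNReal.sub_half hAtop] at h2
  have hc : ENNReal.ofReal (T ^ (p - 1)) = (x / 2) ^ (p - 1) := by
    rw [← hToR, ← ENNReal.ofReal_rpow_of_pos hT0]
  have hBge : (x / 2) ^ (p - 1) * (A / 2) ≤ B := by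
    calc (x / 2) ^ (p - 1) * (A / 2) ≤ (x / 2) ^ (p - 1) * ∫⁻ t in Set.Ioi T, μ t :=
          mul_le_mul_right hS _
      _ = ENNReal.ofReal (T ^ (p - 1)) * ∫⁻ t in Set.Ioi T, μ t := by rw [hc]
      _ ≤ B := key T hT0
  have hA2H : A / 2 / H = x / 2 := by
    rw [hx, div_eq_mul_inv A 2, div_eq_mul_inv (A * 2⁻¹), mul_assoc, mul_comm (2⁻¹ : ℝ≥0∞),
      ← mul_assoc, ← div_eq_mul_inv, ← div_eq_mul_inv]
  have hBH : (x / 2) ^ p ≤ B / H := by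
    have h1 : (x / 2) ^ (p - 1) * (A / 2) / H ≤ B / H :=
      ENNReal.div_le_div_right hBge H
    have h2 : (x / 2) ^ (p - 1) * (A / 2) / H = (x / 2) ^ p := by
      rw [div_eq_mul_inv, mul_assoc, ← div_eq_mul_inv, hA2H]
      nth_rewrite 2 [← ENNReal.rpow_one (x / 2)]
      rw [← ENNReal.rpow_add _ _ hx20 hx2top]
      norm_num
    rwa [h2] at h1
  have hfin : x / 2 ≤ (B / H) ^ (1 / p) := by
    have h1 : ((x / 2) ^ p) ^ (1 / p) ≤ (B / H) ^ (1 / p) :=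
      ENNReal.rpow_le_rpow hBH (by positivity)
    rwa [← ENNReal.rpow_mul, mul_one_div_cancel hp0.ne', ENNReal.rpow_one] at h1
  have hgoal : A / H ≤ ENNReal.ofReal 2 * (B / H) ^ (1 / p) := by
    calc A / H = x := hx.symm
      _ = 2 * (x / 2) := (ENNReal.mul_div_cancel two_ne_zero ENNReal.ofNat_ne_top).symm
      _ ≤ 2 * (B / H) ^ (1 / p) := mul_le_mul_right hfin _
      _ = ENNReal.ofReal 2 * (B / H) ^ (1 / p) := by norm_num
  exact hgoal
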